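/- Test-density construction in the proof of Lemma 5.2. For the FA-1f model with two empty boundaries at density ρ∈(0,1) and integers K≥1 and N≥2K+2: inf{ 𝒟_N(√f) : f:Ω_N→[0,∞), ν(f)=1, ν( f·∏_{x=K+1}^{N−K} η_x )=1 } ≤ Σ_{K,K}. (Explicitly, if g attains Σ_{K,K} on Ω_{2K+2}, the density h(η)=ρ^{−(N−2K−2)} g(η_1,…,η_{K+1},η_{N−K},…,η_N) ∏_{j=K+2}^{N−K−1} η_j satisfies ν(h)=1, ν(h·∏_{x=K+1}^{N−K}η_x)=1 and 𝒟_N(√h)=𝒟_{2K+2}(√g).) -/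

import Mathlib

open Finset Filter

open scoped Classical

/-- A configuration on the box `{1,…,N}` (0-indexed by `Fin N`). -/
abbrev Config (N : ℕ) := Fin N → Bool

/-- Occupation variable `η_i ∈ {0,1}` as a real number. -/
noncomputable def occ {N : ℕ} (η : Config N) (i : Fin N) : ℝ := if η i then 1 else 0

/-- Bernoulli(ρ) product weight of a configuration. -/
noncomputable def bern (ρ : ℝ) {N : ℕ} (η : Config N) : ℝ :=
  ∏ i, (if η i then ρ else 1 - ρ)

/-- Expectation under the Bernoulli(ρ) product measure `ν`. -/
noncomputable def expect (ρ : ℝ) {N : ℕ} (f : Config N → ℝ) : ℝ :=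
  ∑ η : Config N, bern ρ η * f η

/-- The configuration `η^i`, obtained by flipping `η` at site `i`. -/
def flipAt {N : ℕ} (η : Config N) (i : Fin N) : Config N :=
  Function.update η i (!η i)

/-- Occupation at the 1-indexed position `k ∈ {0,…,N+1}`, with boundary value
`bl` at `k = 0` and `br` at `k = N+1` (and beyond). -/
noncomputable def occAt {N : ℕ} (η : Config N) (bl br : ℝ) (k : ℕ) : ℝ :=
  if hk : k = 0 then bl
  else if h : k ≤ N then (if η ⟨k - 1, by omega⟩ then 1 else 0) else br

/-- The three kinetically constrained models considered: East (empty right boundary),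
FA-1f with two empty boundaries, FA-1f with one empty (right) boundary. -/
inductive KCM | east | fa2 | fa1

/-- The kinetic constraint `r_i(η)` of each model, at the (0-indexed) site `i`. -/
noncomputable def constr (m : KCM) {N : ℕ} (η : Config N) (i : Fin N) : ℝ :=
  match m with
  | KCM.east => 1 - occAt η 0 0 (i.1 + 2)
  | KCM.fa2  => 1 - occAt η 0 0 i.1 * occAt η 0 0 (i.1 + 2)
  | KCM.fa1  => 1 - occAt η 1 0 i.1 * occAt η 1 0 (i.1 + 2)

/-- The jump rate `c_i(η) = r_i(η)·[η_i(1−ρ)+(1−η_i)ρ]`. -/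
noncomputable def crate (m : KCM) (ρ : ℝ) {N : ℕ} (η : Config N) (i : Fin N) : ℝ :=
  constr m η i * (if η i then 1 - ρ else ρ)

/-- The escape rate `𝓗(η) = Σ_i c_i(η)`. -/
noncomputable def escRate (m : KCM) (ρ : ℝ) {N : ℕ} (η : Config N) : ℝ :=
  ∑ i, crate m ρ η i

/-- The Dirichlet form `𝒟_N(g) = Σ_i ν(c_i(η)(g(η^i)−g(η))²)`. -/
noncomputable def dirichlet (m : KCM) (ρ : ℝ) {N : ℕ} (g : Config N → ℝ) : ℝ :=
  ∑ i, expect ρ (fun η => crate m ρ η i * (g (flipAt η i) - g η) ^ 2)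

/-- The rescaled cumulant generating function `φ^{(N)}(λ)`, via the
Donsker–Varadhan variational (principal eigenvalue) formula. -/
noncomputable def phi (m : KCM) (ρ : ℝ) (N : ℕ) (lam : ℝ) : ℝ :=
  sSup { x | ∃ f : Config N → ℝ, (∀ η, 0 ≤ f η) ∧ expect ρ f = 1 ∧
    x = (Real.exp lam - 1) * expect ρ (fun η => f η * escRate m ρ η)
        - Real.exp lam * dirichlet m ρ (fun η => Real.sqrt (f η)) }

/-- The mean instantaneous activity `𝔸 = ν(c_j)` at an interior site `j`:
`2ρ(1−ρ)²` for East and `2ρ(1−ρ)(1−ρ²)` for FA-1f. -/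
noncomputable def meanAct (m : KCM) (ρ : ℝ) : ℝ :=
  match m with
  | KCM.east => 2 * ρ * (1 - ρ) ^ 2
  | _ => 2 * ρ * (1 - ρ) * (1 - ρ ^ 2)

/-- The two-boundary interface energy `Σ_{L,L'}` for FA-1f with two empty
boundaries: the infimum of `𝒟_{L+L'+2}(√f)` over probability densities `f`
with `ν(f·η_{L+1}η_{L+2}) = 1`. -/
noncomputable def SigmaTwo (ρ : ℝ) (L L' : ℕ) : ℝ :=
  sInf { x | ∃ f : Config (L + L' + 2) → ℝ, (∀ η, 0 ≤ f η) ∧ expect ρ f = 1 ∧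
    expect ρ (fun η => f η * occ η ⟨L, by omega⟩ * occ η ⟨L + 1, by omega⟩) = 1 ∧
    x = dirichlet KCM.fa2 ρ (fun η => Real.sqrt (f η)) }

/-- The one-boundary interface energy `Σ_L`: the infimum of `𝒟_L(√f)`
over probability densities `f` with `ν(f·η_1) = 1`, for the model `m`. -/
noncomputable def SigmaOne (m : KCM) (ρ : ℝ) (L : ℕ) : ℝ :=
  sInf { x | ∃ f : Config L → ℝ, (∀ η, 0 ≤ f η) ∧ expect ρ f = 1 ∧
    expect ρ (fun η => f η * occAt η 0 0 1) = 1 ∧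
    x = dirichlet m ρ (fun η => Real.sqrt (f η)) }

namespace TDC

variable (K m : ℕ)

def ι : Fin (K+K+2+m) → (Fin (K+K+2)) ⊕ (Fin m) := fun j =>
  if _ : j.1 ≤ K then Sum.inl ⟨j.1, by omega⟩
  else if _ : j.1 ≤ K + m then Sum.inr ⟨j.1 - (K+1), by omega⟩
  else Sum.inl ⟨j.1 - m, by omega⟩

def ιinv : (Fin (K+K+2)) ⊕ (Fin m) → Fin (K+K+2+m) := fun s =>
  match s with
  | Sum.inl i => if _ : i.1 ≤ K then ⟨i.1, by omega⟩ else ⟨i.1 + m, by omega⟩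
  | Sum.inr j => ⟨K+1+j.1, by omega⟩

def ιE : Fin (K+K+2+m) ≃ (Fin (K+K+2)) ⊕ (Fin m) where
  toFun := ι K m
  invFun := ιinv K m
  left_inv := by
    intro j
    by_cases h1 : j.1 ≤ K
    · simp only [ι, dif_pos h1, ιinv]
    · by_cases h2 : j.1 ≤ K + m
      · simp only [ι, dif_neg h1, dif_pos h2, ιinv]
        exact Fin.ext (show K+1+(j.1-(K+1)) = j.1 by omega)
      · simp only [ι, dif_neg h1, dif_neg h2, ιinv]
        rw [dif_neg (show ¬ (j.1 - m ≤ K) by omega)]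
        exact Fin.ext (show j.1 - m + m = j.1 by omega)
  right_inv := by
    intro s
    match s with
    | Sum.inl i =>
      by_cases hi : i.1 ≤ K
      · simp only [ιinv, dif_pos hi, ι]
      · simp only [ιinv, dif_neg hi, ι]
        rw [dif_neg (show ¬ (i.1 + m ≤ K) by omega), dif_neg (show ¬ (i.1 + m ≤ K + m) by omega)]
        exact congrArg Sum.inl (Fin.ext (show i.1 + m - m = i.1 by omega))
    | Sum.inr j =>
      simp only [ιinv, ι]
      exact (dif_neg (show ¬ (K+1+j.1 ≤ K) by omega)).trans ((dif_pos (show K+1+j.1 ≤ K + m by omega)).trans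
        (congrArg Sum.inr (Fin.ext (show K+1+j.1-(K+1) = j.1 by omega))))

def combine (ζ : Config (K+K+2)) (ξ : Config m) : Config (K+K+2+m) :=
  fun j => Sum.elim ζ ξ (ιE K m j)

def restr (η : Config (K+K+2+m)) : Config (K+K+2) :=
  fun i => η ((ιE K m).symm (Sum.inl i))

def mid (η : Config (K+K+2+m)) : Config m :=
  fun j => η ((ιE K m).symm (Sum.inr j))

variable {K m}

lemma combine_low {ζ ξ} {t : ℕ} (ht : t < K+K+2+m) (h : t ≤ K) :
    combine K m ζ ξ ⟨t, ht⟩ = ζ ⟨t, by omega⟩ := by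
  simp only [combine, ιE, Equiv.coe_fn_mk, ι]
  rw [dif_pos h]
  rfl

lemma combine_mid {ζ ξ} {t : ℕ} (ht : t < K+K+2+m) (h1 : K < t) (h2 : t ≤ K + m) :
    combine K m ζ ξ ⟨t, ht⟩ = ξ ⟨t - (K+1), by omega⟩ := by
  simp only [combine, ιE, Equiv.coe_fn_mk, ι]
  rw [dif_neg (by omega), dif_pos h2]
  rfl

lemma combine_high {ζ ξ} {t : ℕ} (ht : t < K+K+2+m) (h : K + m < t) :
    combine K m ζ ξ ⟨t, ht⟩ = ζ ⟨t - m, by omega⟩ := by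
  simp only [combine, ιE, Equiv.coe_fn_mk, ι]
  rw [dif_neg (by omega), dif_neg (by omega)]
  rfl

lemma restr_combine (ζ : Config (K+K+2)) (ξ : Config m) : restr K m (combine K m ζ ξ) = ζ := by
  funext i
  simp only [restr, combine, Equiv.apply_symm_apply, Sum.elim_inl]

lemma mid_combine (ζ : Config (K+K+2)) (ξ : Config m) : mid K m (combine K m ζ ξ) = ξ := by
  funext j
  simp only [mid, combine, Equiv.apply_symm_apply, Sum.elim_inr]

lemma combine_symm_inl {ζ : Config (K+K+2)} {ξ : Config m} (i : Fin (K+K+2)) :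
    combine K m ζ ξ ((ιE K m).symm (Sum.inl i)) = ζ i := by
  simp only [combine, Equiv.apply_symm_apply, Sum.elim_inl, Sum.elim_inr]

lemma combine_symm_inr {ζ : Config (K+K+2)} {ξ : Config m} (j : Fin m) :
    combine K m ζ ξ ((ιE K m).symm (Sum.inr j)) = ξ j := by
  simp only [combine, Equiv.apply_symm_apply, Sum.elim_inl, Sum.elim_inr]

def eC : Config (K+K+2+m) ≃ (Config (K+K+2)) × (Config m) where
  toFun η := (restr K m η, mid K m η)
  invFun p := combine K m p.1 p.2
  left_inv := by
    intro η
    funext j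
    simp only [combine]
    rcases h : ιE K m j with i | jj
    · show restr K m η i = η j
      simp only [restr, ← h, Equiv.symm_apply_apply]
    · show mid K m η jj = η j
      simp only [mid, ← h, Equiv.symm_apply_apply]
  right_inv := by
    intro p
    exact Prod.ext (restr_combine p.1 p.2) (mid_combine p.1 p.2)

lemma sum_split (F : Config (K+K+2+m) → ℝ) :
    ∑ η : Config (K+K+2+m), F η = ∑ ζ : Config (K+K+2), ∑ ξ : Config m, F (combine K m ζ ξ) := by
  rw [← Equiv.sum_comp (eC (K := K) (m := m)).symm F, Fintype.sum_prod_type]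
  rfl

lemma bern_combine (ρ : ℝ) (ζ : Config (K+K+2)) (ξ : Config m) :
    bern ρ (combine K m ζ ξ) = bern ρ ζ * bern ρ ξ := by
  have h := Equiv.prod_comp (ιE K m) (fun s => if Sum.elim ζ ξ s then ρ else 1 - ρ)
  unfold bern
  simp only [combine]
  refine h.trans ?_
  rw [Fintype.prod_sum_type]
  simp only [Sum.elim_inl, Sum.elim_inr]
  rfl


noncomputable def midInd {m : ℕ} (ξ : Config m) : ℝ := ∏ j, (if ξ j then (1:ℝ) else 0)

lemma midInd_eq (ξ : Config m) : midInd ξ = if (∀ j, ξ j = true) then 1 else 0 := by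
  unfold midInd
  split_ifs with h
  · exact Finset.prod_eq_one (fun j _ => by rw [h j, if_pos rfl])
  · push_neg at h
    obtain ⟨j, hj⟩ := h
    exact Finset.prod_eq_zero (Finset.mem_univ j) (by simp [hj])

lemma midInd_01 (ξ : Config m) : midInd ξ = 0 ∨ midInd ξ = 1 := by
  rw [midInd_eq]; split_ifs <;> simp

lemma midInd_one_iff (ξ : Config m) : midInd ξ = 1 ↔ ∀ j, ξ j = true := by
  rw [midInd_eq]; split_ifs with h <;> simp [h]

lemma midInd_sq (ξ : Config m) : midInd ξ ^ 2 = midInd ξ := by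
  rcases midInd_01 ξ with h | h <;> rw [h] <;> ring

lemma midInd_nonneg (ξ : Config m) : 0 ≤ midInd ξ := by
  rcases midInd_01 ξ with h | h <;> rw [h] <;> norm_num

lemma bern_pos {ρ : ℝ} (hρ0 : 0 < ρ) (hρ1 : ρ < 1) {n : ℕ} (η : Config n) :
    0 < bern ρ η :=
  Finset.prod_pos (fun i _ => by split_ifs <;> linarith)

lemma bern_const_true (ρ : ℝ) (n : ℕ) :
    bern ρ (fun _ : Fin n => true) = ρ ^ n := by
  unfold bern
  simp [Finset.prod_const]

lemma sum_bern_midInd {ρ : ℝ} (m : ℕ) :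
    ∑ ξ : Config m, bern ρ ξ * midInd ξ = ρ ^ m := by
  rw [Finset.sum_eq_single (fun _ : Fin m => true)]
  · rw [bern_const_true, (midInd_one_iff _).mpr (fun _ => rfl), mul_one]
  · intro ξ _ hne
    have : ¬ (∀ j, ξ j = true) := fun h => hne (funext h)
    rw [midInd_eq, if_neg this, mul_zero]
  · intro h; exact absurd (Finset.mem_univ _) h

lemma occ_01 {n : ℕ} (η : Config n) (i : Fin n) : occ η i = 0 ∨ occ η i = 1 := by
  unfold occ; split_ifs <;> simp

lemma occAt_01 {n : ℕ} (η : Config n) (k : ℕ) :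
    occAt η 0 0 k = 0 ∨ occAt η 0 0 k = 1 := by
  unfold occAt; split_ifs <;> simp

lemma constr_fa2_eq {n : ℕ} (η : Config n) (i : Fin n) :
    constr KCM.fa2 η i = 1 - occAt η 0 0 i.1 * occAt η 0 0 (i.1 + 2) := rfl

lemma crate_nonneg {ρ : ℝ} (hρ0 : 0 < ρ) (hρ1 : ρ < 1) {n : ℕ} (η : Config n) (i : Fin n) :
    0 ≤ crate KCM.fa2 ρ η i := by
  unfold crate
  apply mul_nonneg
  · rw [constr_fa2_eq]
    rcases occAt_01 η i.1 with h | h <;> rcases occAt_01 η (i.1+2) with h' | h' <;>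
      rw [h, h'] <;> norm_num
  · split_ifs <;> linarith

lemma dirichlet_fa2_nonneg {ρ : ℝ} (hρ0 : 0 < ρ) (hρ1 : ρ < 1) {n : ℕ} (g : Config n → ℝ) :
    0 ≤ dirichlet KCM.fa2 ρ g := by
  apply Finset.sum_nonneg
  intro i _
  apply Finset.sum_nonneg
  intro η _
  have h1 : 0 ≤ bern ρ η := le_of_lt (bern_pos hρ0 hρ1 η)
  have h2 : 0 ≤ crate KCM.fa2 ρ η i := crate_nonneg hρ0 hρ1 η i
  positivity

lemma support_lemma {ρ : ℝ} (hρ0 : 0 < ρ) (hρ1 : ρ < 1) (f : Config (K+K+2) → ℝ)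
    (hf0 : ∀ ζ, 0 ≤ f ζ) (h1 : expect ρ f = 1)
    (h2 : expect ρ (fun ζ => f ζ * occ ζ ⟨K, by omega⟩ * occ ζ ⟨K+1, by omega⟩) = 1) :
    ∀ ζ, f ζ ≠ 0 → ζ ⟨K, by omega⟩ = true ∧ ζ ⟨K+1, by omega⟩ = true := by
  intro ζ hζ
  set a : Fin (K+K+2) := ⟨K, by omega⟩
  set b : Fin (K+K+2) := ⟨K+1, by omega⟩
  have hzero : ∑ ζ' : Config (K+K+2),
      bern ρ ζ' * (f ζ' * (1 - occ ζ' a * occ ζ' b)) = 0 := by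
    have : ∀ ζ' : Config (K+K+2), bern ρ ζ' * (f ζ' * (1 - occ ζ' a * occ ζ' b))
        = bern ρ ζ' * f ζ' - bern ρ ζ' * (f ζ' * occ ζ' a * occ ζ' b) := by
      intro ζ'; ring
    rw [Finset.sum_congr rfl (fun ζ' _ => this ζ'), Finset.sum_sub_distrib]
    have e1 : ∑ ζ' : Config (K+K+2), bern ρ ζ' * f ζ' = 1 := h1
    have e2 : ∑ ζ' : Config (K+K+2), bern ρ ζ' * (f ζ' * occ ζ' a * occ ζ' b) = 1 := h2
    rw [e1, e2, sub_self]
  have hnn : ∀ ζ' ∈ (Finset.univ : Finset (Config (K+K+2))),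
      0 ≤ bern ρ ζ' * (f ζ' * (1 - occ ζ' a * occ ζ' b)) := by
    intro ζ' _
    apply mul_nonneg (le_of_lt (bern_pos hρ0 hρ1 ζ'))
    apply mul_nonneg (hf0 ζ')
    rcases occ_01 ζ' a with h | h <;> rcases occ_01 ζ' b with h' | h' <;>
      rw [h, h'] <;> norm_num
  have hz := (Finset.sum_eq_zero_iff_of_nonneg hnn).mp hzero ζ (Finset.mem_univ ζ)
  have hb := bern_pos hρ0 hρ1 (ρ := ρ) ζ
  have hfpos : 0 < f ζ := lt_of_le_of_ne (hf0 ζ) (Ne.symm hζ)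
  have h3 : 1 - occ ζ a * occ ζ b = 0 := by
    rcases mul_eq_zero.mp hz with h | h
    · exact absurd h (ne_of_gt hb)
    · rcases mul_eq_zero.mp h with h' | h'
      · exact absurd h' (ne_of_gt hfpos)
      · exact h'
  constructor
  · rcases occ_01 ζ a with h | h
    · rw [h] at h3; norm_num at h3
    · unfold occ at h; split_ifs at h with hh
      · exact hh
      · norm_num at h
  · rcases occ_01 ζ b with h | h
    · rw [h] at h3
      norm_num at h3
    · unfold occ at h; split_ifs at h with hh
      · exact hh
      · norm_num at h


lemma ceq {n : ℕ} (η : Config n) {a b : ℕ} (ha : a < n) (hb : b < n) (h : a = b) :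
    η ⟨a, ha⟩ = η ⟨b, hb⟩ := by subst h; rfl

lemma flip_combine_inl {ζ : Config (K+K+2)} {ξ : Config m} (i' : Fin (K+K+2)) :
    flipAt (combine K m ζ ξ) ((ιE K m).symm (Sum.inl i')) = combine K m (flipAt ζ i') ξ := by
  funext j
  simp only [flipAt, Function.update_apply, combine]
  by_cases hj : j = (ιE K m).symm (Sum.inl i')
  · rw [if_pos hj, hj]
    simp only [Equiv.apply_symm_apply, Sum.elim_inl, Function.update_self]
  · rw [if_neg hj]
    have hne : ιE K m j ≠ Sum.inl i' := fun h => hj (by rw [← h, Equiv.symm_apply_apply])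
    rcases h : ιE K m j with i | jj
    · rw [Sum.elim_inl, Sum.elim_inl, Function.update_of_ne (fun hc => hne (by rw [h, hc]))]
    · rw [Sum.elim_inr, Sum.elim_inr]

lemma flip_combine_inr {ζ : Config (K+K+2)} {ξ : Config m} (j' : Fin m) :
    flipAt (combine K m ζ ξ) ((ιE K m).symm (Sum.inr j')) = combine K m ζ (flipAt ξ j') := by
  funext j
  simp only [flipAt, Function.update_apply, combine]
  by_cases hj : j = (ιE K m).symm (Sum.inr j')
  · rw [if_pos hj, hj]
    simp only [Equiv.apply_symm_apply, Sum.elim_inr, Function.update_self]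
  · rw [if_neg hj]
    have hne : ιE K m j ≠ Sum.inr j' := fun h => hj (by rw [← h, Equiv.symm_apply_apply])
    rcases h : ιE K m j with i | jj
    · rw [Sum.elim_inl, Sum.elim_inl]
    · rw [Sum.elim_inr, Sum.elim_inr, Function.update_of_ne (fun hc => hne (by rw [h, hc]))]

lemma symm_inl_val (i' : Fin (K+K+2)) :
    (((ιE K m).symm (Sum.inl i')) : Fin (K+K+2+m)).1
      = if i'.1 ≤ K then i'.1 else i'.1 + m := by
  show ((ιinv K m (Sum.inl i')) : Fin (K+K+2+m)).1 = _
  simp only [ιinv]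
  split_ifs <;> rfl

lemma symm_inr_val (j : Fin m) :
    (((ιE K m).symm (Sum.inr j)) : Fin (K+K+2+m)).1 = K + 1 + j.1 := rfl

-- helper: boolean entry of (combine ζ ξ) as `occAt`-style index computation
lemma occAt_combine_left {ζ : Config (K+K+2)} {ξ : Config m}
    (hξ : ∀ j', ξ j' = true) (q : ℕ) (hq : q < K+K+2)
    (hc1 : q = K+1 → ζ ⟨K, by omega⟩ = true) :
    occAt (combine K m ζ ξ) 0 0 (if q ≤ K then q else q + m) = occAt ζ 0 0 q := by
  by_cases h : q ≤ K
  · rw [if_pos h]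
    by_cases h0 : q = 0
    · subst h0; rfl
    · unfold occAt
      rw [dif_neg h0, dif_pos (by omega), dif_neg h0, dif_pos (by omega),
        combine_low (show q-1 < K+K+2+m by omega) (show q - 1 ≤ K by omega)]
  · rw [if_neg h]
    unfold occAt
    rw [dif_neg (by omega), dif_pos (by omega), dif_neg (by omega), dif_pos (by omega)]
    by_cases hq1 : q = K+1
    · by_cases hm : m = 0
      · rw [combine_low (show q+m-1 < K+K+2+m by omega) (show q + m - 1 ≤ K by omega)]
        exact congrArg (fun b => if b = true then (1:ℝ) else 0) (ceq ζ (by omega) (by omega) (show q+m-1 = q-1 by omega))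
      · rw [combine_mid (show q+m-1 < K+K+2+m by omega) (show K < q + m - 1 by omega) (show q + m - 1 ≤ K + m by omega),
          hξ _, if_pos rfl]
        have hz : ζ ⟨q-1, by omega⟩ = true :=
          (ceq ζ (by omega) (by omega) (show q-1 = K by omega)).trans (hc1 hq1)
        rw [hz, if_pos rfl]
    · rw [combine_high (show q+m-1 < K+K+2+m by omega) (show K + m < q + m - 1 by omega)]
      exact congrArg (fun b => if b = true then (1:ℝ) else 0) (ceq ζ (by omega) (by omega) (show q+m-1-m = q-1 by omega))

lemma occAt_combine_right {ζ : Config (K+K+2)} {ξ : Config m}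
    (hξ : ∀ j', ξ j' = true) (q : ℕ) (hq : q < K+K+2) (hK : 1 ≤ K)
    (hc2 : q = K → ζ ⟨K+1, by omega⟩ = true) :
    occAt (combine K m ζ ξ) 0 0 ((if q ≤ K then q else q + m) + 2) = occAt ζ 0 0 (q+2) := by
  by_cases h : q ≤ K
  · rw [if_pos h]
    unfold occAt
    rw [dif_neg (by omega), dif_pos (by omega), dif_neg (by omega), dif_pos (by omega)]
    by_cases hqK : q = K
    · by_cases hm : m = 0
      · rw [combine_high (show q+2-1 < K+K+2+m by omega) (show K + m < q + 2 - 1 by omega)]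
        exact congrArg (fun b => if b = true then (1:ℝ) else 0) (ceq ζ (by omega) (by omega) (show q+2-1-m = q+2-1 by omega))
      · rw [combine_mid (show q+2-1 < K+K+2+m by omega) (show K < q + 2 - 1 by omega) (show q + 2 - 1 ≤ K + m by omega),
          hξ _, if_pos rfl]
        have hz : ζ ⟨q+2-1, by omega⟩ = true :=
          (ceq ζ (by omega) (by omega) (show q+2-1 = K+1 by omega)).trans (hc2 hqK)
        rw [hz, if_pos rfl]
    · rw [combine_low (show q+2-1 < K+K+2+m by omega) (show q + 2 - 1 ≤ K by omega)]
  · rw [if_neg h]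
    by_cases hlast : q = K+K+1
    · unfold occAt
      rw [dif_neg (by omega), dif_neg (by omega), dif_neg (by omega), dif_neg (by omega)]
    · unfold occAt
      rw [dif_neg (by omega), dif_pos (by omega), dif_neg (by omega), dif_pos (by omega),
        combine_high (show q+m+2-1 < K+K+2+m by omega) (show K + m < q + m + 2 - 1 by omega)]
      exact congrArg (fun b => if b = true then (1:ℝ) else 0) (ceq ζ (by omega) (by omega) (show q+m+2-1-m = q+2-1 by omega))

lemma constr_small_eq {ρ : ℝ} {ζ : Config (K+K+2)} {ξ : Config m}
    (hξ : ∀ j', ξ j' = true) (hK : 1 ≤ K) (i' : Fin (K+K+2))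
    (hA : i'.1 ≠ K → ζ ⟨K, by omega⟩ = true) (hB : i'.1 ≠ K+1 → ζ ⟨K+1, by omega⟩ = true) :
    constr KCM.fa2 (combine K m ζ ξ) ((ιE K m).symm (Sum.inl i')) = constr KCM.fa2 ζ i' := by
  rw [constr_fa2_eq, constr_fa2_eq, symm_inl_val,
    occAt_combine_left hξ i'.1 i'.2 (fun h => hA (by omega)),
    occAt_combine_right hξ i'.1 i'.2 hK (fun h => hB (by omega))]

lemma constr_mid_zero {ζ : Config (K+K+2)} {ξ : Config m} (j : Fin m)
    (hξ : ∀ j', j' ≠ j → ξ j' = true)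
    (h1 : ζ ⟨K, by omega⟩ = true) (h2 : ζ ⟨K+1, by omega⟩ = true) :
    constr KCM.fa2 (combine K m ζ ξ) ((ιE K m).symm (Sum.inr j)) = 0 := by
  rw [constr_fa2_eq, symm_inr_val]
  have hL : occAt (combine K m ζ ξ) 0 0 (K+1+j.1) = 1 := by
    unfold occAt
    rw [dif_neg (by omega), dif_pos (by omega)]
    by_cases hj0 : j.1 = 0
    · rw [combine_low (show K+1+j.1-1 < K+K+2+m by omega) (show K+1+j.1-1 ≤ K by omega),
        (ceq ζ (by omega) (by omega) (show K+1+j.1-1 = K by omega)).trans h1, if_pos rfl]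
    · rw [combine_mid (show K+1+j.1-1 < K+K+2+m by omega) (show K < K+1+j.1-1 by omega) (show K+1+j.1-1 ≤ K+m by omega)]
      rw [hξ ⟨K+1+j.1-1-(K+1), by omega⟩ (fun hc => by
        have := congrArg Fin.val hc; simp at this; omega), if_pos rfl]
  have hR : occAt (combine K m ζ ξ) 0 0 (K+1+j.1+2) = 1 := by
    unfold occAt
    rw [dif_neg (by omega), dif_pos (by omega)]
    by_cases hjm : j.1 = m - 1
    · rw [combine_high (show K+1+j.1+2-1 < K+K+2+m by omega) (show K+m < K+1+j.1+2-1 by omega)]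
      rw [(ceq ζ (by omega) (by omega) (show K+1+j.1+2-1-m = K+1 by omega)).trans h2,
        if_pos rfl]
    · rw [combine_mid (show K+1+j.1+2-1 < K+K+2+m by omega) (show K < K+1+j.1+2-1 by omega) (show K+1+j.1+2-1 ≤ K+m by omega)]
      rw [hξ ⟨K+1+j.1+2-1-(K+1), by omega⟩ (fun hc => by
        have := congrArg Fin.val hc; simp at this; omega), if_pos rfl]
  rw [hL, hR]; ring


noncomputable def hBig (ρ : ℝ) (K m : ℕ) (f : Config (K+K+2) → ℝ) : Config (K+K+2+m) → ℝ :=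
  fun η => (ρ^m)⁻¹ * f (restr K m η) * midInd (mid K m η)

lemma sqrt_hBig {ρ : ℝ} (hρ0 : 0 < ρ) {f : Config (K+K+2) → ℝ}
    (η : Config (K+K+2+m)) :
    Real.sqrt (hBig ρ K m f η)
      = Real.sqrt ((ρ^m)⁻¹) * Real.sqrt (f (restr K m η)) * midInd (mid K m η) := by
  rcases midInd_01 (mid K m η) with h | h
  · rw [h, mul_zero]
    unfold hBig
    rw [h, mul_zero, Real.sqrt_zero]
  · rw [h, mul_one]
    unfold hBig
    rw [h, mul_one, Real.sqrt_mul (inv_nonneg.mpr (pow_nonneg hρ0.le m))]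

lemma prod_filter_combine {ζ : Config (K+K+2)} {ξ : Config m} :
    (∏ i ∈ Finset.univ.filter (fun x : Fin (K+K+2+m) => K ≤ x.1 ∧ x.1 < K+K+2+m - K),
      occ (combine K m ζ ξ) i)
      = occ ζ ⟨K, by omega⟩ * occ ζ ⟨K+1, by omega⟩ * midInd ξ := by
  rw [Finset.prod_filter,
    ← Equiv.prod_comp (ιE K m).symm
      (fun i : Fin (K+K+2+m) =>
        if K ≤ i.1 ∧ i.1 < K+K+2+m - K then occ (combine K m ζ ξ) i else 1),
    Fintype.prod_sum_type]
  have hinr : ∀ j : Fin m,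
      (if K ≤ (((ιE K m).symm (Sum.inr j)) : Fin (K+K+2+m)).1 ∧
          (((ιE K m).symm (Sum.inr j)) : Fin (K+K+2+m)).1 < K+K+2+m - K
        then occ (combine K m ζ ξ) ((ιE K m).symm (Sum.inr j)) else 1)
      = (if ξ j then (1:ℝ) else 0) := by
    intro j
    rw [if_pos (by rw [symm_inr_val]; omega)]
    unfold occ
    rw [combine_symm_inr]
  have hinl : ∀ i' : Fin (K+K+2),
      (if K ≤ (((ιE K m).symm (Sum.inl i')) : Fin (K+K+2+m)).1 ∧
          (((ιE K m).symm (Sum.inl i')) : Fin (K+K+2+m)).1 < K+K+2+m - K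
        then occ (combine K m ζ ξ) ((ιE K m).symm (Sum.inl i')) else 1)
      = (if i' = (⟨K, by omega⟩ : Fin (K+K+2)) then occ ζ i' else 1) *
        (if i' = (⟨K+1, by omega⟩ : Fin (K+K+2)) then occ ζ i' else 1) := by
    intro i'
    have hocc : occ (combine K m ζ ξ) ((ιE K m).symm (Sum.inl i')) = occ ζ i' := by
      unfold occ; rw [combine_symm_inl]
    by_cases hP : K ≤ (((ιE K m).symm (Sum.inl i')) : Fin (K+K+2+m)).1 ∧
        (((ιE K m).symm (Sum.inl i')) : Fin (K+K+2+m)).1 < K+K+2+m - K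
    · rw [if_pos hP, hocc]
      have hi : i'.1 = K ∨ i'.1 = K + 1 := by
        rw [symm_inl_val] at hP; split_ifs at hP <;> omega
      rcases hi with h | h
      · rw [if_pos (Fin.ext h), if_neg (fun hc => by
          have : i'.1 = K+1 := by rw [hc]
          omega), mul_one]
      · rw [if_neg (fun hc => by
          have : i'.1 = K := by rw [hc]
          omega), if_pos (Fin.ext h), one_mul]
    · rw [if_neg hP]
      have hi : i'.1 ≠ K ∧ i'.1 ≠ K + 1 := by
        rw [symm_inl_val] at hP
        by_cases h : i'.1 ≤ K
        · rw [if_pos h] at hP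
          constructor <;> intro hc <;> exact hP (by omega)
        · rw [if_neg h] at hP
          constructor <;> intro hc <;> exact hP (by omega)
      rw [if_neg (fun hc => hi.1 (by rw [hc])), if_neg (fun hc => hi.2 (by rw [hc])), mul_one]
  rw [Finset.prod_congr rfl (fun j _ => hinr j), Finset.prod_congr rfl (fun i' _ => hinl i'),
    Finset.prod_mul_distrib, Finset.prod_ite_eq', Finset.prod_ite_eq',
    if_pos (Finset.mem_univ _), if_pos (Finset.mem_univ _)]
  rfl


lemma expect_hBig {ρ : ℝ} (hρ0 : 0 < ρ) (f : Config (K+K+2) → ℝ)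
    (h1 : expect ρ f = 1) : expect ρ (hBig ρ K m f) = 1 := by
  have hρm : (ρ:ℝ)^m ≠ 0 := pow_ne_zero m (ne_of_gt hρ0)
  unfold _root_.expect
  rw [sum_split]
  have key : ∀ (ζ : Config (K+K+2)) (ξ : Config m),
      bern ρ (combine K m ζ ξ) * hBig ρ K m f (combine K m ζ ξ)
      = ((ρ^m)⁻¹ * (bern ρ ζ * f ζ)) * (bern ρ ξ * midInd ξ) := by
    intro ζ ξ
    rw [bern_combine]
    unfold hBig
    rw [restr_combine, mid_combine]
    ring
  rw [Finset.sum_congr rfl (fun ζ _ => Finset.sum_congr rfl (fun ξ _ => key ζ ξ)),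
    ← Finset.sum_mul_sum, sum_bern_midInd, ← Finset.mul_sum]
  have h1' : (∑ ζ : Config (K+K+2), bern ρ ζ * f ζ) = 1 := h1
  rw [h1', mul_one, inv_mul_cancel₀ hρm]

lemma expect_hBig_constraint {ρ : ℝ} (hρ0 : 0 < ρ) (f : Config (K+K+2) → ℝ)
    (h2 : expect ρ (fun ζ => f ζ * occ ζ ⟨K, by omega⟩ * occ ζ ⟨K+1, by omega⟩) = 1) :
    expect ρ (fun η => hBig ρ K m f η *
      ∏ i ∈ Finset.univ.filter (fun x : Fin (K+K+2+m) => K ≤ x.1 ∧ x.1 < K+K+2+m - K),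
        occ η i) = 1 := by
  have hρm : (ρ:ℝ)^m ≠ 0 := pow_ne_zero m (ne_of_gt hρ0)
  unfold _root_.expect
  rw [sum_split]
  have key : ∀ (ζ : Config (K+K+2)) (ξ : Config m),
      bern ρ (combine K m ζ ξ) * (hBig ρ K m f (combine K m ζ ξ) *
        ∏ i ∈ Finset.univ.filter (fun x : Fin (K+K+2+m) => K ≤ x.1 ∧ x.1 < K+K+2+m - K),
          occ (combine K m ζ ξ) i)
      = ((ρ^m)⁻¹ * (bern ρ ζ * (f ζ * occ ζ ⟨K, by omega⟩ * occ ζ ⟨K+1, by omega⟩)))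
        * (bern ρ ξ * midInd ξ) := by
    intro ζ ξ
    rw [bern_combine, prod_filter_combine]
    unfold hBig
    rw [restr_combine, mid_combine]
    have hsq : midInd ξ * midInd ξ = midInd ξ := by
      rw [← sq]; exact midInd_sq ξ
    linear_combination (bern ρ ζ * bern ρ ξ * (ρ^m)⁻¹ * f ζ *
      occ ζ ⟨K, by omega⟩ * occ ζ ⟨K+1, by omega⟩) * hsq
  rw [Finset.sum_congr rfl (fun ζ _ => Finset.sum_congr rfl (fun ξ _ => key ζ ξ)),
    ← Finset.sum_mul_sum, sum_bern_midInd, ← Finset.mul_sum]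
  have h2' : (∑ ζ : Config (K+K+2),
      bern ρ ζ * (f ζ * occ ζ ⟨K, by omega⟩ * occ ζ ⟨K+1, by omega⟩)) = 1 := h2
  rw [h2', mul_one, inv_mul_cancel₀ hρm]

lemma dirichlet_hBig {ρ : ℝ} (hρ0 : 0 < ρ) (hK : 1 ≤ K) (f : Config (K+K+2) → ℝ)
    (hf0 : ∀ ζ, 0 ≤ f ζ)
    (hsupp : ∀ ζ, f ζ ≠ 0 → ζ ⟨K, by omega⟩ = true ∧ ζ ⟨K+1, by omega⟩ = true) :
    dirichlet KCM.fa2 ρ (fun η : Config (K+K+2+m) => Real.sqrt (hBig ρ K m f η))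
      = dirichlet KCM.fa2 ρ (fun ζ : Config (K+K+2) => Real.sqrt (f ζ)) := by
  have hρm : (ρ:ℝ)^m ≠ 0 := pow_ne_zero m (ne_of_gt hρ0)
  have hcnn : (0:ℝ) ≤ (ρ^m)⁻¹ := inv_nonneg.mpr (pow_nonneg hρ0.le m)
  unfold dirichlet
  rw [← Equiv.sum_comp (ιE K m).symm, Fintype.sum_sum_type]
  have hmidterm : ∀ j : Fin m,
      expect ρ (fun η => crate KCM.fa2 ρ η ((ιE K m).symm (Sum.inr j)) *
        (Real.sqrt (hBig ρ K m f (flipAt η ((ιE K m).symm (Sum.inr j))))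
          - Real.sqrt (hBig ρ K m f η)) ^ 2) = 0 := by
    intro j
    unfold _root_.expect
    rw [sum_split]
    apply Finset.sum_eq_zero
    intro ζ _
    apply Finset.sum_eq_zero
    intro ξ _
    beta_reduce
    rw [flip_combine_inr, sqrt_hBig hρ0, sqrt_hBig hρ0, restr_combine, mid_combine,
      restr_combine, mid_combine]
    by_cases hf : f ζ = 0
    · rw [hf, Real.sqrt_zero]; ring
    · obtain ⟨hzK, hzK1⟩ := hsupp ζ hf
      by_cases hPi : midInd (flipAt ξ j) = midInd ξ
      · rw [hPi]; ring
      · have hξ' : ∀ j', j' ≠ j → ξ j' = true := by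
          rcases midInd_01 ξ with h0 | h1
          · rcases midInd_01 (flipAt ξ j) with h0' | h1'
            · exact absurd (h0'.trans h0.symm) hPi
            · intro j' hj'
              have := (midInd_one_iff _).mp h1' j'
              rwa [flipAt, Function.update_of_ne hj'] at this
          · intro j' _
            exact (midInd_one_iff _).mp h1 j'
        have hc0 : constr KCM.fa2 (combine K m ζ ξ) ((ιE K m).symm (Sum.inr j)) = 0 :=
          constr_mid_zero j hξ' hzK hzK1
        unfold crate
        rw [hc0]
        ring
  have hsmall : ∀ i' : Fin (K+K+2),
      expect ρ (fun η => crate KCM.fa2 ρ η ((ιE K m).symm (Sum.inl i')) *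
        (Real.sqrt (hBig ρ K m f (flipAt η ((ιE K m).symm (Sum.inl i'))))
          - Real.sqrt (hBig ρ K m f η)) ^ 2)
      = expect ρ (fun ζ => crate KCM.fa2 ρ ζ i' *
          (Real.sqrt (f (flipAt ζ i')) - Real.sqrt (f ζ)) ^ 2) := by
    intro i'
    unfold _root_.expect
    rw [sum_split]
    have key : ∀ (ζ : Config (K+K+2)) (ξ : Config m),
        bern ρ (combine K m ζ ξ) * (crate KCM.fa2 ρ (combine K m ζ ξ) ((ιE K m).symm (Sum.inl i')) *
          (Real.sqrt (hBig ρ K m f (flipAt (combine K m ζ ξ) ((ιE K m).symm (Sum.inl i'))))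
            - Real.sqrt (hBig ρ K m f (combine K m ζ ξ))) ^ 2)
        = ((bern ρ ζ * (crate KCM.fa2 ρ ζ i' *
            (Real.sqrt (f (flipAt ζ i')) - Real.sqrt (f ζ)) ^ 2)) * (ρ^m)⁻¹)
          * (bern ρ ξ * midInd ξ) := by
      intro ζ ξ
      rw [bern_combine, flip_combine_inl, sqrt_hBig hρ0, sqrt_hBig hρ0, restr_combine,
        mid_combine, restr_combine, mid_combine]
      have hcr : crate KCM.fa2 ρ (combine K m ζ ξ) ((ιE K m).symm (Sum.inl i')) *
          (midInd ξ * (Real.sqrt (f (flipAt ζ i')) - Real.sqrt (f ζ)) ^ 2)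
          = crate KCM.fa2 ρ ζ i' *
            (midInd ξ * (Real.sqrt (f (flipAt ζ i')) - Real.sqrt (f ζ)) ^ 2) := by
        by_cases hPi : midInd ξ = 0
        · rw [hPi]; ring
        · have hPi1 := (midInd_01 ξ).resolve_left hPi
          by_cases hD : (Real.sqrt (f (flipAt ζ i')) - Real.sqrt (f ζ)) ^ 2 = 0
          · rw [hD]; ring
          · have hfne : f (flipAt ζ i') ≠ 0 ∨ f ζ ≠ 0 := by
              by_contra hcon
              push_neg at hcon
              exact hD (by rw [hcon.1, hcon.2, Real.sqrt_zero, sub_self]; ring)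
            have hA : i'.1 ≠ K → ζ ⟨K, by omega⟩ = true := by
              intro hiK
              rcases hfne with h | h
              · have hz := (hsupp _ h).1
                rwa [flipAt, Function.update_of_ne
                  (fun hc : (⟨K, by omega⟩ : Fin (K+K+2)) = i' => hiK (by rw [← hc]))] at hz
              · exact (hsupp _ h).1
            have hB : i'.1 ≠ K+1 → ζ ⟨K+1, by omega⟩ = true := by
              intro hiK
              rcases hfne with h | h
              · have hz := (hsupp _ h).2
                rwa [flipAt, Function.update_of_ne
                  (fun hc : (⟨K+1, by omega⟩ : Fin (K+K+2)) = i' => hiK (by rw [← hc]))] at hz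
              · exact (hsupp _ h).2
            have hcs := constr_small_eq (ρ := ρ) ((midInd_one_iff ξ).mp hPi1) hK i' hA hB
            unfold crate
            rw [hcs, combine_symm_inl]
      have hsq : (Real.sqrt ((ρ^m)⁻¹) * Real.sqrt (f (flipAt ζ i')) * midInd ξ
            - Real.sqrt ((ρ^m)⁻¹) * Real.sqrt (f ζ) * midInd ξ) ^ 2
          = (ρ^m)⁻¹ * (midInd ξ *
              (Real.sqrt (f (flipAt ζ i')) - Real.sqrt (f ζ)) ^ 2) := by
        have e1 : (Real.sqrt ((ρ^m)⁻¹) * Real.sqrt (f (flipAt ζ i')) * midInd ξ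
            - Real.sqrt ((ρ^m)⁻¹) * Real.sqrt (f ζ) * midInd ξ) ^ 2
            = (Real.sqrt ((ρ^m)⁻¹))^2 * (midInd ξ)^2 *
              (Real.sqrt (f (flipAt ζ i')) - Real.sqrt (f ζ)) ^ 2 := by ring
        rw [e1, Real.sq_sqrt hcnn, midInd_sq]
        ring
      rw [hsq]
      linear_combination (bern ρ ζ * bern ρ ξ * (ρ^m)⁻¹) * hcr
    rw [Finset.sum_congr rfl (fun ζ _ => Finset.sum_congr rfl (fun ξ _ => key ζ ξ)),
      ← Finset.sum_mul_sum, sum_bern_midInd, Finset.sum_mul]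
    apply Finset.sum_congr rfl
    intro ζ _
    have : (ρ^m)⁻¹ * ρ^m = 1 := inv_mul_cancel₀ hρm
    linear_combination (bern ρ ζ * (crate KCM.fa2 ρ ζ i' *
      (Real.sqrt (f (flipAt ζ i')) - Real.sqrt (f ζ)) ^ 2)) * this
  rw [Finset.sum_congr rfl (fun i' (_ : i' ∈ Finset.univ) => hsmall i'),
    Finset.sum_eq_zero (fun j (_ : j ∈ Finset.univ) => hmidterm j), add_zero]


lemma sigmaTwo_set_nonempty {ρ : ℝ} (hρ0 : 0 < ρ) (K : ℕ) :
    Set.Nonempty { x | ∃ f : Config (K + K + 2) → ℝ, (∀ η, 0 ≤ f η) ∧ expect ρ f = 1 ∧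
      expect ρ (fun η => f η * occ η ⟨K, by omega⟩ * occ η ⟨K + 1, by omega⟩) = 1 ∧
      x = dirichlet KCM.fa2 ρ (fun η => Real.sqrt (f η)) } := by
  have hρn : (ρ:ℝ) ^ (K+K+2) ≠ 0 := pow_ne_zero _ (ne_of_gt hρ0)
  refine ⟨_, fun ζ => if ζ = (fun _ => true) then (ρ ^ (K+K+2))⁻¹ else 0, ?_, ?_, ?_, rfl⟩
  · intro η
    dsimp only
    split_ifs
    · positivity
    · exact le_refl 0
  · unfold _root_.expect
    rw [Finset.sum_eq_single (fun _ : Fin (K+K+2) => true)]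
    · dsimp only
      rw [if_pos rfl, bern_const_true, mul_inv_cancel₀ hρn]
    · intro ξ _ hne
      dsimp only
      rw [if_neg hne, mul_zero]
    · intro h
      exact absurd (Finset.mem_univ _) h
  · unfold _root_.expect
    rw [Finset.sum_eq_single (fun _ : Fin (K+K+2) => true)]
    · dsimp only
      rw [if_pos rfl]
      have h1 : occ (fun _ : Fin (K+K+2) => true) ⟨K, by omega⟩ = 1 := by
        unfold occ; rw [if_pos rfl]
      have h2 : occ (fun _ : Fin (K+K+2) => true) ⟨K+1, by omega⟩ = 1 := by
        unfold occ; rw [if_pos rfl]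
      rw [h1, h2, mul_one, mul_one, bern_const_true, mul_inv_cancel₀ hρn]
    · intro ξ _ hne
      dsimp only
      rw [if_neg hne, zero_mul, zero_mul, mul_zero]
    · intro h
      exact absurd (Finset.mem_univ _) h

end TDC

/-- **Test-density construction in the proof of Lemma 5.2.** For FA-1f with two
empty boundaries at density `ρ ∈ (0,1)`, `K ≥ 1` and `N ≥ 2K+2`: the infimum of
`𝒟_N(√f)` over probability densities `f` with `ν(f·∏_{x=K+1}^{N−K} η_x) = 1` is
at most `Σ_{K,K}`. -/
theorem test_density_construction (ρ : ℝ) (hρ0 : 0 < ρ) (hρ1 : ρ < 1)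
    (K N : ℕ) (hK : 1 ≤ K) (hN : 2 * K + 2 ≤ N) :
    sInf { x | ∃ f : Config N → ℝ, (∀ η, 0 ≤ f η) ∧ expect ρ f = 1 ∧
        expect ρ (fun η => f η *
          ∏ i ∈ Finset.univ.filter (fun x : Fin N => K ≤ x.1 ∧ x.1 < N - K), occ η i) = 1 ∧
        x = dirichlet KCM.fa2 ρ (fun η => Real.sqrt (f η)) }
      ≤ SigmaTwo ρ K K := by
  obtain ⟨m, rfl⟩ : ∃ m, N = K + K + 2 + m := ⟨N - (K + K + 2), by omega⟩
  unfold SigmaTwo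
  apply csInf_le_csInf
  · refine ⟨0, ?_⟩
    rintro x ⟨f, hf0, hf1, hf2, rfl⟩
    exact TDC.dirichlet_fa2_nonneg hρ0 hρ1 _
  · exact TDC.sigmaTwo_set_nonempty hρ0 K
  · rintro x ⟨f, hf0, hf1, hf2, rfl⟩
    have hsupp := TDC.support_lemma hρ0 hρ1 f hf0 hf1 hf2
    exact ⟨TDC.hBig ρ K m f,
      fun η => mul_nonneg (mul_nonneg (inv_nonneg.mpr (pow_nonneg hρ0.le m)) (hf0 _))
        (TDC.midInd_nonneg _),
      TDC.expect_hBig hρ0 f hf1,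
      TDC.expect_hBig_constraint hρ0 f hf2,
      (TDC.dirichlet_hBig hρ0 hK f hf0 hsupp).symm⟩
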